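/- Suppose M is a simple matroid of rank r with exactly (q^r − 1)/(q − 1) points in which every line has at most q + 1 points, and suppose that for every element e, ε(M/e) ≤ (q^{r−1} − 1)/(q − 1). Then every line of M has exactly q + 1 points. -/

import Mathlib

open Matroid Set

/-- The rank of a set `X` in a matroid `M`: the supremum of sizes of independent subsets. -/
noncomputable def mrk {α : Type*} (M : Matroid α) (X : Set α) : ℕ :=
  ⨆ I : {I : Set α // M.Indep I ∧ I ⊆ X}, I.1.ncard

/-- The rank of a matroid. -/
noncomputable def mrank {α : Type*} (M : Matroid α) : ℕ := mrk M M.E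

/-- Deletion of a set from a matroid. -/
def mdelete {α : Type*} (M : Matroid α) (D : Set α) : Matroid α := M ↾ (M.E \ D)

/-- Contraction of a set in a matroid, via duality. -/
def mcontract {α : Type*} (M : Matroid α) (C : Set α) : Matroid α := (M✶ ↾ (M.E \ C))✶

/-- `eps M X` is the number of points (rank-1 flats) of the restriction `M ↾ X`. -/
noncomputable def eps {α : Type*} (M : Matroid α) (X : Set α) : ℕ :=
  {P : Set α | (M ↾ X).IsFlat P ∧ mrk (M ↾ X) P = 1}.ncard

/-- `N` is isomorphic to the uniform matroid `U_{2,n}` (the `n`-point line). -/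
def IsUnif2 {α : Type*} (N : Matroid α) (n : ℕ) : Prop :=
  N.E.Finite ∧ N.E.ncard = n ∧ ∀ I ⊆ N.E, (N.Indep I ↔ I.Finite ∧ I.ncard ≤ 2)

/-- `M` has a minor isomorphic to `U_{2,n}`. -/
def HasLineMinor {α : Type*} (M : Matroid α) (n : ℕ) : Prop :=
  ∃ C D : Set α, IsUnif2 (mdelete (mcontract M C) D) n

/-- `M` is simple: every one- or two-element subset of the ground set is independent. -/
def MSimple {α : Type*} (M : Matroid α) : Prop :=
  ∀ e ∈ M.E, ∀ f ∈ M.E, M.Indep {e, f}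

/-- `M` is round: the ground set admits no partition into two sets of smaller rank. -/
def Round {α : Type*} (M : Matroid α) : Prop :=
  ¬ ∃ A B : Set α, A ∪ B = M.E ∧ Disjoint A B ∧ mrk M A < mrank M ∧ mrk M B < mrank M

/-- `N` is isomorphic to the projective geometry `PG(n-1, F)`: its ground set is in
bijection with the rank-1 subspaces of `F^n` in such a way that independence corresponds to
linear independence. -/
def IsProjGeom {α : Type*} (N : Matroid α) (n : ℕ) (F : Type*) [Field F] : Prop :=
  ∃ f : α → Submodule F (Fin n → F),
    Set.BijOn f N.E {W : Submodule F (Fin n → F) | Module.finrank F W = 1} ∧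
    ∀ I ⊆ N.E, (N.Indep I ↔ I.Finite ∧ Module.finrank F ↥(⨆ x ∈ I, f x) = I.ncard)

section AuxLemmas

variable {α : Type*} {M : Matroid α} {I J B D X Y P F L : Set α} {e f x y : α}

instance mrk_nonempty (M : Matroid α) (X : Set α) :
    Nonempty {I : Set α // M.Indep I ∧ I ⊆ X} :=
  ⟨⟨∅, M.empty_indep, empty_subset X⟩⟩

lemma mrk_bddAbove (M : Matroid α) [M.Finite] (X : Set α) :
    BddAbove (Set.range fun I : {I : Set α // M.Indep I ∧ I ⊆ X} => I.1.ncard) := by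
  refine ⟨M.E.ncard, ?_⟩
  rintro n ⟨⟨I, hI, hIX⟩, rfl⟩
  exact Set.ncard_le_ncard hI.subset_ground M.ground_finite

lemma le_mrk [M.Finite] (hI : M.Indep I) (hIX : I ⊆ X) : I.ncard ≤ mrk M X :=
  le_ciSup (mrk_bddAbove M X) ⟨I, hI, hIX⟩

lemma mrk_le {n : ℕ} (h : ∀ I, M.Indep I → I ⊆ X → I.ncard ≤ n) : mrk M X ≤ n :=
  ciSup_le fun ⟨I, hI, hIX⟩ => h I hI hIX

lemma basis_encard_eq (hI : M.IsBasis I X) (hJ : M.IsBasis J X) : I.encard = J.encard :=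
  hI.isBase_restrict.encard_eq_encard_of_isBase hJ.isBase_restrict

lemma mrk_eq_of_basis [M.Finite] (hI : M.IsBasis I X) : mrk M X = I.ncard := by
  refine le_antisymm (mrk_le fun J hJ hJX => ?_) (le_mrk hI.indep hI.subset)
  obtain ⟨J', hJ', hJJ'⟩ := hJ.subset_isBasis_of_subset hJX hI.subset_ground
  have h1 : J.ncard ≤ J'.ncard :=
    Set.ncard_le_ncard hJJ' (M.set_finite J' hJ'.indep.subset_ground)
  have h2 : J'.ncard = I.ncard := by
    rw [Set.ncard_def, basis_encard_eq hJ' hI, ← Set.ncard_def]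
  omega

lemma MSimple.indep_singleton (h : MSimple M) (he : e ∈ M.E) : M.Indep {e} := by
  simpa using h e he e he

lemma flat_of_closure_eq (hF : F ⊆ M.E) (h : M.closure F = F) : M.IsFlat F := by
  refine ⟨fun I X hIF hIX => ?_, hF⟩
  calc X ⊆ M.closure I := hIX.subset_closure
  _ = M.closure F := hIF.closure_eq_closure
  _ = F := h

lemma closure_flat' (M : Matroid α) (X : Set α) : M.IsFlat (M.closure X) :=
  flat_of_closure_eq (M.closure_subset_ground X) (M.closure_closure X)

lemma point_iff_singleton [M.Finite] (h : MSimple M) (hX : X ⊆ M.E) :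
    {P | (M ↾ X).IsFlat P ∧ mrk (M ↾ X) P = 1} = (fun x => ({x} : Set α)) '' X := by
  haveI : (M ↾ X).Finite := restrict_finite (M.set_finite X hX)
  ext P
  simp only [mem_setOf_eq, mem_image]
  constructor
  · rintro ⟨hF, hr⟩
    have hPX : P ⊆ X := by simpa using hF.subset_ground
    obtain ⟨I, hI⟩ := (M ↾ X).exists_isBasis P (by simpa using hPX)
    rw [mrk_eq_of_basis hI] at hr
    obtain ⟨a, rfl⟩ := Set.ncard_eq_one.mp hr
    have haP : a ∈ P := hI.subset rfl
    refine ⟨a, hPX haP, ?_⟩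
    refine subset_antisymm (singleton_subset_iff.mpr haP) (fun b hb => ?_)
    by_contra hba
    have hba' : b ≠ a := by simpa using hba
    have hind : (M ↾ X).Indep (insert b {a}) := by
      rw [restrict_indep_iff]
      exact ⟨h b (hX (hPX hb)) a (hX (hPX haP)),
        insert_subset (hPX hb) (singleton_subset_iff.mpr (hPX haP))⟩
    have := hI.eq_of_subset_indep hind (subset_insert _ _)
      (insert_subset hb hI.subset)
    exact hba' (by simpa using (this ▸ (mem_insert b {a}) : b ∈ ({a} : Set α)))
  · rintro ⟨a, haX, rfl⟩
    have hind : (M ↾ X).Indep {a} := by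
      rw [restrict_indep_iff]
      exact ⟨h.indep_singleton (hX haX), by simpa using haX⟩
    constructor
    · refine ⟨fun I Y hIa hIY => ?_, by simpa using haX⟩
      have hIa' : I = {a} := by
        rcases Set.subset_singleton_iff_eq.mp hIa.subset with rfl | rfl
        · exfalso
          have := hIa.insert_dep (e := a) (by simp)
          simp only [insert_empty_eq] at this
          exact this.not_indep hind
        · rfl
      subst hIa'
      intro b hb
      by_contra hba
      have hba' : b ≠ a := by simpa using hba
      have hbX : b ∈ X := by simpa using hIY.subset_ground hb
      have hind2 : (M ↾ X).Indep (insert b {a}) := by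
        rw [restrict_indep_iff]
        exact ⟨h b (hX hbX) a (hX haX), insert_subset hbX (by simpa using haX)⟩
      have := hIY.eq_of_subset_indep hind2 (subset_insert _ _) (insert_subset hb hIY.subset)
      exact hba' (by simpa using (this ▸ (mem_insert b {a}) : b ∈ ({a} : Set α)))
    · rw [mrk_eq_of_basis hind.isBasis_self]
      simp

lemma eps_eq_ncard [M.Finite] (h : MSimple M) (hX : X ⊆ M.E) : eps M X = X.ncard := by
  rw [eps, point_iff_singleton h hX, Set.ncard_image_of_injOn]
  intro a _ b _ hab
  simpa using hab

lemma mcontract_ground (M : Matroid α) (C : Set α) : (mcontract M C).E = M.E \ C := rfl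

lemma mcontract_finite [M.Finite] : (mcontract M {e}).Finite :=
  ⟨(M.ground_finite.subset diff_subset : (M.E \ {e}).Finite)⟩

/-- If `e` is a non-coloop of `M✶` (i.e. a nonloop of `M`), every basis of `M.E \ {e}` in `M✶`
is a base of `M✶`. -/
lemma dual_basis_compl_base (he : e ∈ M.E) (hnl : M.Indep {e}) [M.Finite]
    (hD : M✶.IsBasis D (M.E \ {e})) : M✶.IsBase D := by
  obtain ⟨C, hC, heC⟩ := hnl.exists_isBase_superset
  have hB0 : M✶.IsBase (M.E \ C) := hC.compl_isBase_dual
  obtain ⟨Dh, hDh, hDDh⟩ := hD.indep.exists_isBase_superset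
  have hsub : Dh ⊆ insert e D := by
    intro x hx
    by_contra hx'
    simp only [mem_insert_iff, not_or] at hx'
    have hxE : x ∈ M.E := hDh.subset_ground hx
    have hind : M✶.Indep (insert x D) :=
      hDh.indep.subset (insert_subset hx hDDh)
    have := hD.eq_of_subset_indep hind (subset_insert _ _)
      (insert_subset ⟨hxE, hx'.1⟩ hD.subset)
    exact hx'.2 (this ▸ mem_insert x D)
  by_cases heDh : e ∈ Dh
  · exfalso
    have heD : e ∉ D := fun h => (hD.subset h).2 rfl
    have hDhe : Dh = insert e D :=
      subset_antisymm hsub (insert_subset heDh hDDh)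
    have hbase : M✶.IsBase (insert e D) := hDhe ▸ hDh
    have hB0sub : M.E \ C ⊆ M.E \ {e} := by
      intro z hz
      exact ⟨hz.1, fun h => hz.2 (h ▸ heC rfl)⟩
    obtain ⟨B', hB', hsub'⟩ := hB0.indep.subset_isBasis_of_subset hB0sub
      (diff_subset.trans (by rw [dual_ground]))
    have h1 : (M.E \ C).encard = (insert e D).encard := hB0.encard_eq_encard_of_isBase hbase
    have h2 : B'.encard = D.encard :=
      hB'.isBase_restrict.encard_eq_encard_of_isBase hD.isBase_restrict
    have h3 : (M.E \ C).encard ≤ B'.encard := Set.encard_le_encard hsub'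
    rw [h1, h2, Set.encard_insert_of_notMem heD] at h3
    have hfin : D.Finite := M.set_finite D (hD.indep.subset_ground.trans (by rw [dual_ground]))
    have := hfin.encard_lt_top
    exact absurd h3 (by simp [ENat.add_one_le_iff this.ne])
  · have : Dh ⊆ D := fun x hx => ((hsub hx).resolve_left (fun h => heDh (h ▸ hx)))
    rwa [subset_antisymm hDDh this]

lemma mcontract_base_iff (he : e ∈ M.E) (hnl : M.Indep {e}) [M.Finite] :
    (mcontract M {e}).IsBase B ↔ B ⊆ M.E \ {e} ∧ M.IsBase (insert e B) := by
  have hgr : (M✶ ↾ (M.E \ {e})).E = M.E \ {e} := rfl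
  rw [mcontract, dual_isBase_iff', hgr]
  have hXsub : M.E \ {e} ⊆ M✶.E := by rw [dual_ground]; exact diff_subset
  constructor
  · rintro ⟨hbase, hBsub⟩
    rw [isBase_restrict_iff hXsub] at hbase
    have hdb : M✶.IsBase ((M.E \ {e}) \ B) := dual_basis_compl_base he hnl hbase
    have hset : (M.E \ {e}) \ B = M.E \ (insert e B) := by
      rw [diff_diff, Set.insert_eq]
    rw [hset] at hdb
    have := hdb.compl_isBase_of_dual
    rw [diff_diff_cancel_left (insert_subset he (hBsub.trans diff_subset))] at this
    exact ⟨hBsub, this⟩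
  · rintro ⟨hBsub, hbase⟩
    refine ⟨?_, hBsub⟩
    rw [isBase_restrict_iff hXsub]
    have hdb : M✶.IsBase (M.E \ (insert e B)) := hbase.compl_isBase_dual
    have hset : (M.E \ {e}) \ B = M.E \ (insert e B) := by
      rw [diff_diff, Set.insert_eq]
    rw [← hset] at hdb
    exact hdb.indep.isBasis_of_forall_insert diff_subset
      (fun x hx => (hdb.insert_dep ⟨(hx.1).1, hx.2⟩))

lemma mcontract_indep_iff (he : e ∈ M.E) (hnl : M.Indep {e}) [M.Finite] :
    (mcontract M {e}).Indep I ↔ I ⊆ M.E \ {e} ∧ M.Indep (insert e I) := by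
  constructor
  · intro hI
    obtain ⟨B, hB, hIB⟩ := hI.exists_isBase_superset
    rw [mcontract_base_iff he hnl] at hB
    exact ⟨hIB.trans hB.1, hB.2.indep.subset (insert_subset_insert hIB)⟩
  · rintro ⟨hIE, hind⟩
    obtain ⟨C, hC, hsub⟩ := hind.exists_isBase_superset
    have heC : e ∈ C := hsub (mem_insert _ _)
    refine Matroid.indep_iff.mpr ⟨C \ {e}, ?_, ?_⟩
    · rw [mcontract_base_iff he hnl]
      refine ⟨diff_subset_diff_left hC.subset_ground, ?_⟩
      rwa [insert_diff_singleton, insert_eq_of_mem heC]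
    · exact fun x hx => ⟨hsub (mem_insert_of_mem _ hx), fun h => (hIE hx).2 h⟩

lemma mcontract_exists_basis (he : e ∈ M.E) (hnl : M.Indep {e}) [M.Finite]
    (hX : X ⊆ M.E \ {e}) :
    ∃ J, (mcontract M {e}).IsBasis J X ∧ M.IsBasis (insert e J) (insert e X) ∧ e ∉ J := by
  have hXE : insert e X ⊆ M.E := insert_subset he (hX.trans diff_subset)
  obtain ⟨I, hI, heI⟩ := hnl.subset_isBasis_of_subset
    (singleton_subset_iff.mpr (mem_insert e X)) hXE
  have heI' : e ∈ I := heI rfl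
  set J := I \ {e} with hJ
  have hIJ : insert e J = I := by rw [hJ, insert_diff_singleton, insert_eq_of_mem heI']
  have hJX : J ⊆ X := by
    intro x hx
    rcases mem_insert_iff.mp (hI.subset hx.1) with h | h
    · exact absurd h hx.2
    · exact h
  have hJE : J ⊆ M.E \ {e} := fun x hx =>
    ⟨hI.indep.subset_ground hx.1, hx.2⟩
  have hJind : (mcontract M {e}).Indep J := by
    rw [mcontract_indep_iff he hnl, hIJ]
    exact ⟨hJE, hI.indep⟩
  refine ⟨J, ?_, hIJ ▸ hI, fun h => h.2 rfl⟩
  refine hJind.isBasis_of_forall_insert hJX (fun x hx => ?_)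
  have hxE : x ∈ M.E \ {e} := hX hx.1
  constructor
  · rw [mcontract_indep_iff he hnl]
    rintro ⟨-, hind⟩
    have : insert e (insert x J) = insert x I := by rw [insert_comm, hIJ]
    rw [this] at hind
    have hxI : x ∉ I := by
      rw [← hIJ]
      intro h
      rcases mem_insert_iff.mp h with h' | h'
      · exact hxE.2 h'
      · exact hx.2 h'
    have hdep := hI.insert_dep ⟨mem_insert_of_mem _ hx.1, hxI⟩
    exact hdep.not_indep hind
  · rw [mcontract_ground]
    exact insert_subset hxE (hJX.trans hX)

lemma mrk_mcontract (he : e ∈ M.E) (hnl : M.Indep {e}) [M.Finite] (hX : X ⊆ M.E \ {e}) :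
    mrk (mcontract M {e}) X + 1 = mrk M (insert e X) := by
  haveI : (mcontract M {e}).Finite := mcontract_finite
  obtain ⟨J, hJ, hJ', heJ⟩ := mcontract_exists_basis he hnl hX
  rw [mrk_eq_of_basis hJ, mrk_eq_of_basis hJ',
    Set.ncard_insert_of_notMem heJ
      (M.set_finite J ((subset_insert e J).trans hJ'.indep.subset_ground))]

lemma mcontract_closure (he : e ∈ M.E) (hnl : M.Indep {e}) [M.Finite] (hX : X ⊆ M.E \ {e}) :
    (mcontract M {e}).closure X = M.closure (insert e X) \ {e} := by
  obtain ⟨J, hJ, hJ', heJ⟩ := mcontract_exists_basis he hnl hX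
  set N := mcontract M {e} with hN
  have hNE : N.E = M.E \ {e} := mcontract_ground M {e}
  have hJE : J ⊆ M.E \ {e} := hJ.subset.trans hX
  ext x
  simp only [mem_diff, mem_singleton_iff]
  constructor
  · intro hx
    have hxE : x ∈ N.E := N.closure_subset_ground X hx
    have hxE' : x ∈ M.E \ {e} := hNE ▸ hxE
    rw [← hJ.closure_eq_closure, hJ.indep.mem_closure_iff] at hx
    refine ⟨?_, hxE'.2⟩
    rw [← hJ'.closure_eq_closure, hJ'.indep.mem_closure_iff]
    rcases hx with hdep | hxJ
    · left
      rw [insert_comm]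
      have hnind : ¬ N.Indep (insert x J) := hdep.not_indep
      rw [mcontract_indep_iff he hnl] at hnind
      have hsub : insert x J ⊆ M.E \ {e} := insert_subset hxE' hJE
      rw [← @not_indep_iff _ M (insert e (insert x J))
        (insert_subset he (insert_subset hxE'.1 (hJE.trans diff_subset)))]
      intro hind
      exact hnind ⟨hsub, hind⟩
    · exact Or.inr (mem_insert_of_mem _ hxJ)
  · rintro ⟨hx, hxe⟩
    have hxE : x ∈ M.E := M.mem_ground_of_mem_closure hx
    rw [← hJ'.closure_eq_closure, hJ'.indep.mem_closure_iff] at hx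
    rw [← hJ.closure_eq_closure, hJ.indep.mem_closure_iff]
    rcases hx with hdep | hxJ
    · left
      constructor
      · intro hind
        rw [mcontract_indep_iff he hnl] at hind
        rw [insert_comm] at hdep
        exact hdep.not_indep hind.2
      · rw [hNE]
        exact insert_subset ⟨hxE, hxe⟩ hJE
    · rcases mem_insert_iff.mp hxJ with h | h
      · exact absurd h hxe
      · exact Or.inr h

lemma mcontract_flat_iff (he : e ∈ M.E) (hnl : M.Indep {e}) [M.Finite] (hP : P ⊆ M.E \ {e}) :
    (mcontract M {e}).IsFlat P ↔ M.IsFlat (insert e P) := by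
  have heP : e ∉ P := fun h => (hP h).2 rfl
  constructor
  · intro h
    have h1 : (mcontract M {e}).closure P = P := h.closure
    rw [mcontract_closure he hnl hP] at h1
    have h3 : e ∈ M.closure (insert e P) :=
      M.subset_closure (insert e P) (insert_subset he (hP.trans diff_subset)) (mem_insert _ _)
    have h4 : M.closure (insert e P) = insert e P := by
      rw [← h1, insert_diff_singleton, insert_eq_of_mem h3]
      exact M.closure_closure _
    exact flat_of_closure_eq (insert_subset he (hP.trans diff_subset)) h4
  · intro h
    have h1 : (mcontract M {e}).closure P = P := by
      rw [mcontract_closure he hnl hP, h.closure, insert_diff_of_mem _ (mem_singleton e),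
        diff_singleton_eq_self heP]
    exact flat_of_closure_eq (by rw [mcontract_ground M {e}]; exact hP) h1

lemma points_mcontract (he : e ∈ M.E) (hnl : M.Indep {e}) [M.Finite] :
    {P | (mcontract M {e}).IsFlat P ∧ mrk (mcontract M {e}) P = 1}
      = (fun L => L \ {e}) '' {L | M.IsFlat L ∧ mrk M L = 2 ∧ e ∈ L} := by
  ext P
  simp only [mem_setOf_eq, mem_image]
  constructor
  · rintro ⟨hF, hr⟩
    have hP : P ⊆ M.E \ {e} := by rw [← mcontract_ground M {e}]; exact hF.subset_ground
    have heP : e ∉ P := fun h => (hP h).2 rfl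
    refine ⟨insert e P, ⟨(mcontract_flat_iff he hnl hP).mp hF, ?_, mem_insert _ _⟩, ?_⟩
    · rw [← mrk_mcontract he hnl hP, hr]
    · rw [insert_diff_of_mem _ (mem_singleton e), diff_singleton_eq_self heP]
  · rintro ⟨L, ⟨hL, hr, heL⟩, rfl⟩
    have hsub : L \ {e} ⊆ M.E \ {e} := diff_subset_diff_left hL.subset_ground
    have hins : insert e (L \ {e}) = L := by
      rw [insert_diff_singleton, insert_eq_of_mem heL]
    constructor
    · rw [mcontract_flat_iff he hnl hsub, hins]
      exact hL
    · have := mrk_mcontract he hnl hsub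
      rw [hins, hr] at this
      omega

lemma eps_mcontract (he : e ∈ M.E) (hnl : M.Indep {e}) [M.Finite] :
    eps (mcontract M {e}) (mcontract M {e}).E
      = {L | M.IsFlat L ∧ mrk M L = 2 ∧ e ∈ L}.ncard := by
  rw [eps, restrict_ground_eq_self, points_mcontract he hnl, Set.ncard_image_of_injOn]
  intro L1 h1 L2 h2 h12
  have h12' : L1 \ {e} = L2 \ {e} := h12
  have e1 : insert e (L1 \ {e}) = L1 := by
    rw [insert_diff_singleton, insert_eq_of_mem h1.2.2]
  have e2 : insert e (L2 \ {e}) = L2 := by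
    rw [insert_diff_singleton, insert_eq_of_mem h2.2.2]
  rw [← e1, ← e2, h12']

lemma closure_pair_line [M.Finite] (hs : MSimple M) (he : e ∈ M.E) (hf : f ∈ M.E) (hef : e ≠ f) :
    M.IsFlat (M.closure {e, f}) ∧ mrk M (M.closure {e, f}) = 2 ∧
      e ∈ M.closure {e, f} ∧ f ∈ M.closure {e, f} := by
  have hp : M.Indep {e, f} := hs e he f hf
  have hsub : ({e, f} : Set α) ⊆ M.E := insert_subset he (singleton_subset_iff.mpr hf)
  refine ⟨closure_flat' M _, ?_, M.subset_closure _ hsub (by simp), M.subset_closure _ hsub (by simp)⟩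
  rw [mrk_eq_of_basis hp.isBasis_closure, Set.ncard_pair hef]

lemma line_eq_closure_pair [M.Finite] (hL : M.IsFlat L) (hr : mrk M L = 2)
    (hp : M.Indep {e, f}) (hef : e ≠ f) (heL : e ∈ L) (hfL : f ∈ L) :
    L = M.closure {e, f} := by
  have hsub : ({e, f} : Set α) ⊆ L := insert_subset heL (singleton_subset_iff.mpr hfL)
  obtain ⟨B, hB, hsubB⟩ := hp.subset_isBasis_of_subset hsub hL.subset_ground
  have hBcard : B.ncard = 2 := by rw [← mrk_eq_of_basis hB, hr]
  have hBfin : B.Finite := M.set_finite B hB.indep.subset_ground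
  have hBeq : {e, f} = B := Set.eq_of_subset_of_ncard_le hsubB
    (by rw [hBcard, Set.ncard_pair hef]) hBfin
  apply subset_antisymm
  · calc L ⊆ M.closure B := hB.subset_closure
    _ = M.closure {e, f} := by rw [← hBeq]
  · rw [← hL.closure]
    exact M.closure_subset_closure hsub

lemma ncard_biUnion_le_mul {ι : Type*} {s : Set ι} (hs : s.Finite) (f : ι → Set α) (k : ℕ)
    (hk : ∀ i ∈ s, (f i).ncard ≤ k) :
    (⋃ i ∈ s, f i).ncard ≤ s.ncard * k := by
  refine Set.Finite.induction_on
    (motive := fun s _ => (∀ i ∈ s, (f i).ncard ≤ k) → (⋃ i ∈ s, f i).ncard ≤ s.ncard * k)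
    s hs (by simp) @?_ hk
  intro a t hat htfin ih hk'
  rw [biUnion_insert]
  calc (f a ∪ ⋃ i ∈ t, f i).ncard ≤ (f a).ncard + (⋃ i ∈ t, f i).ncard :=
        Set.ncard_union_le _ _
  _ ≤ k + t.ncard * k :=
        add_le_add (hk' a (mem_insert _ _)) (ih fun i hi => hk' i (mem_insert_of_mem _ hi))
  _ = (insert a t).ncard * k := by
        rw [Set.ncard_insert_of_notMem hat htfin]; ring

theorem stmt12' {α : Type*} (M : Matroid α) [M.Finite] (q r : ℕ) (hq : 2 ≤ q)
    (hsimple : MSimple M) (hrank : mrank M = r)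
    (heps : (eps M M.E : ℝ) = ((q : ℝ) ^ r - 1) / ((q : ℝ) - 1))
    (hlines : ∀ L, M.IsFlat L → mrk M L = 2 → eps M L ≤ q + 1)
    (hcon : ∀ e ∈ M.E, (eps (mcontract M {e}) (mcontract M {e}).E : ℝ) ≤
      ((q : ℝ) ^ (r - 1) - 1) / ((q : ℝ) - 1)) :
    ∀ L, M.IsFlat L → mrk M L = 2 → eps M L = q + 1 := by
  intro L hL hr2
  by_contra hne
  have hLE : L ⊆ M.E := hL.subset_ground
  have hepsL : eps M L = L.ncard := eps_eq_ncard hsimple hLE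
  have hLcard : L.ncard ≤ q := by
    have h1 := hlines L hL hr2
    rw [hepsL] at h1 hne
    omega
  -- find a point e on L
  obtain ⟨B, hB⟩ := M.exists_isBasis L hLE
  have hB2 : B.ncard = 2 := by rw [← mrk_eq_of_basis hB, hr2]
  obtain ⟨e, heB⟩ : B.Nonempty := Set.nonempty_of_ncard_ne_zero (by omega)
  have heL : e ∈ L := hB.subset heB
  have heE : e ∈ M.E := hLE heL
  have hnl : M.Indep {e} := hsimple.indep_singleton heE
  set 𝓁 := {L' | M.IsFlat L' ∧ mrk M L' = 2 ∧ e ∈ L'} with h𝓁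
  have h𝓁fin : 𝓁.Finite :=
    M.ground_finite.finite_subsets.subset (fun L' hL' => hL'.1.subset_ground)
  have hL𝓁 : L ∈ 𝓁 := ⟨hL, hr2, heL⟩
  have hm1 : 1 ≤ 𝓁.ncard := (Set.ncard_pos h𝓁fin).mpr ⟨L, hL𝓁⟩
  -- real number facts
  have hq2 : (2 : ℝ) ≤ (q : ℝ) := by exact_mod_cast hq
  have hqne1 : (q : ℝ) ≠ 1 := by linarith
  -- cast geometric sums
  have hcastr : ∀ n : ℕ, ((∑ i ∈ Finset.range n, q ^ i : ℕ) : ℝ)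
      = ((q : ℝ) ^ n - 1) / ((q : ℝ) - 1) := by
    intro n
    push_cast
    rw [geom_sum_eq hqne1]
  -- ground set cardinality
  have hEcard : M.E.ncard = ∑ i ∈ Finset.range r, q ^ i := by
    have h1 : ((eps M M.E : ℕ) : ℝ) = ((∑ i ∈ Finset.range r, q ^ i : ℕ) : ℝ) := by
      rw [heps, hcastr]
    have h2 : eps M M.E = ∑ i ∈ Finset.range r, q ^ i := Nat.cast_injective h1
    rwa [eps_eq_ncard hsimple subset_rfl] at h2
  -- number of lines through e
  have hmN' : 𝓁.ncard ≤ ∑ i ∈ Finset.range (r - 1), q ^ i := by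
    have h2 := hcon e heE
    rw [eps_mcontract heE hnl, ← h𝓁, ← hcastr] at h2
    exact_mod_cast h2
  -- r is positive
  have hrpos : 1 ≤ r := by
    by_contra h
    have hr0 : r = 0 := by omega
    rw [hr0] at hEcard
    simp at hEcard
    have : 0 < M.E.ncard := (Set.ncard_pos M.ground_finite).mpr ⟨e, heE⟩
    omega
  have hNr' : ∑ i ∈ Finset.range r, q ^ i
      = 1 + q * ∑ i ∈ Finset.range (r - 1), q ^ i := by
    obtain ⟨r', rfl⟩ : ∃ r', r = r' + 1 := ⟨r - 1, by omega⟩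
    rw [geom_sum_succ]
    simp [Nat.add_comm]
  -- decomposition of the ground set
  set U := ⋃ L' ∈ 𝓁 \ {L}, (L' \ {e}) with hU
  have hUE : U ⊆ M.E := by
    refine iUnion₂_subset fun L' hL' => ?_
    exact diff_subset.trans hL'.1.1.subset_ground
  have hdecomp : M.E \ {e} ⊆ (L \ {e}) ∪ U := by
    intro f hf
    have hfE : f ∈ M.E := hf.1
    have hfe : f ≠ e := hf.2
    have hp : M.Indep {e, f} := hsimple e heE f hfE
    obtain ⟨hflat, hrk, hecl, hfcl⟩ := closure_pair_line hsimple heE hfE (Ne.symm hfe)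
    have hL0 : M.closure {e, f} ∈ 𝓁 := ⟨hflat, hrk, hecl⟩
    by_cases hL0L : M.closure {e, f} = L
    · exact Or.inl ⟨hL0L ▸ hfcl, hf.2⟩
    · exact Or.inr (mem_biUnion ⟨hL0, by simpa using hL0L⟩ ⟨hfcl, hf.2⟩)
  -- cardinality bounds
  have hlinecard : ∀ L' ∈ 𝓁, (L' \ {e}).ncard ≤ q := by
    intro L' hL'
    have h1 : eps M L' = L'.ncard := eps_eq_ncard hsimple hL'.1.subset_ground
    have h2 : L'.ncard ≤ q + 1 := h1 ▸ hlines L' hL'.1 hL'.2.1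
    have h3 : (L' \ {e}).ncard + 1 = L'.ncard :=
      Set.ncard_diff_singleton_add_one hL'.2.2 (M.set_finite L' hL'.1.subset_ground)
    omega
  obtain ⟨m', hm'⟩ : ∃ m', 𝓁.ncard = m' + 1 := ⟨𝓁.ncard - 1, by omega⟩
  have h𝓁diff : (𝓁 \ {L}).ncard = m' := by
    have := Set.ncard_diff_singleton_add_one hL𝓁 h𝓁fin
    omega
  have hUle : U.ncard ≤ m' * q := by
    have h1 := ncard_biUnion_le_mul (s := 𝓁 \ {L}) (h𝓁fin.subset diff_subset) (fun L' => L' \ {e}) q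
      (fun L' hL' => hlinecard L' hL'.1)
    rwa [h𝓁diff] at h1
  have hLe : (L \ {e}).ncard + 1 = L.ncard :=
    Set.ncard_diff_singleton_add_one heL (M.set_finite L hLE)
  have hEe : (M.E \ {e}).ncard + 1 = M.E.ncard :=
    Set.ncard_diff_singleton_add_one heE M.ground_finite
  have hEle : (M.E \ {e}).ncard ≤ (L \ {e}).ncard + U.ncard := by
    calc (M.E \ {e}).ncard ≤ ((L \ {e}) ∪ U).ncard :=
          Set.ncard_le_ncard hdecomp
            (M.ground_finite.subset (union_subset (diff_subset.trans hLE) hUE))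
    _ ≤ (L \ {e}).ncard + U.ncard := Set.ncard_union_le _ _
  -- final contradiction
  have hmul1 : q * (m' + 1) ≤ q * ∑ i ∈ Finset.range (r - 1), q ^ i :=
    Nat.mul_le_mul_left q (hm' ▸ hmN')
  have hmul2 : q * (m' + 1) = q * m' + q := by ring
  have hcomm : m' * q = q * m' := Nat.mul_comm _ _
  -- Nr ≤ q + q*m'  while  Nr ≥ 1 + q*m' + q
  have hup : M.E.ncard ≤ (L \ {e}).ncard + U.ncard + 1 := by omega
  have hlow : 1 + (q * m' + q) ≤ ∑ i ∈ Finset.range r, q ^ i := by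
    rw [hNr']
    omega
  rw [hEcard] at hup
  have hLq : (L \ {e}).ncard + 1 ≤ q := by omega
  have hUq : U.ncard ≤ q * m' := by omega
  omega

end AuxLemmas

/-- In an extremal matroid, every line has exactly `q + 1` points. -/
theorem stmt12 {α : Type*} (M : Matroid α) [M.Finite] (q r : ℕ) (hq : 2 ≤ q)
    (hsimple : MSimple M) (hrank : mrank M = r)
    (heps : (eps M M.E : ℝ) = ((q : ℝ) ^ r - 1) / ((q : ℝ) - 1))
    (hlines : ∀ L, M.IsFlat L → mrk M L = 2 → eps M L ≤ q + 1)
    (hcon : ∀ e ∈ M.E, (eps (mcontract M {e}) (mcontract M {e}).E : ℝ) ≤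
      ((q : ℝ) ^ (r - 1) - 1) / ((q : ℝ) - 1)) :
    ∀ L, M.IsFlat L → mrk M L = 2 → eps M L = q + 1 := by

  intro L hL hr2
  by_contra hne
  have hLE : L ⊆ M.E := hL.subset_ground
  have hepsL : eps M L = L.ncard := eps_eq_ncard hsimple hLE
  have hLcard : L.ncard ≤ q := by
    have h1 := hlines L hL hr2
    rw [hepsL] at h1 hne
    omega
  -- find a point e on L
  obtain ⟨B, hB⟩ := M.exists_isBasis L hLE
  have hB2 : B.ncard = 2 := by rw [← mrk_eq_of_basis hB, hr2]
  obtain ⟨e, heB⟩ : B.Nonempty := Set.nonempty_of_ncard_ne_zero (by omega)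
  have heL : e ∈ L := hB.subset heB
  have heE : e ∈ M.E := hLE heL
  have hnl : M.Indep {e} := hsimple.indep_singleton heE
  set 𝓁 := {L' | M.IsFlat L' ∧ mrk M L' = 2 ∧ e ∈ L'} with h𝓁
  have h𝓁fin : 𝓁.Finite :=
    M.ground_finite.finite_subsets.subset (fun L' hL' => hL'.1.subset_ground)
  have hL𝓁 : L ∈ 𝓁 := ⟨hL, hr2, heL⟩
  have hm1 : 1 ≤ 𝓁.ncard := (Set.ncard_pos h𝓁fin).mpr ⟨L, hL𝓁⟩
  -- real number facts
  have hq2 : (2 : ℝ) ≤ (q : ℝ) := by exact_mod_cast hq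
  have hqne1 : (q : ℝ) ≠ 1 := by linarith
  -- cast geometric sums
  have hcastr : ∀ n : ℕ, ((∑ i ∈ Finset.range n, q ^ i : ℕ) : ℝ)
      = ((q : ℝ) ^ n - 1) / ((q : ℝ) - 1) := by
    intro n
    push_cast
    rw [geom_sum_eq hqne1]
  -- ground set cardinality
  have hEcard : M.E.ncard = ∑ i ∈ Finset.range r, q ^ i := by
    have h1 : ((eps M M.E : ℕ) : ℝ) = ((∑ i ∈ Finset.range r, q ^ i : ℕ) : ℝ) := by
      rw [heps, hcastr]
    have h2 : eps M M.E = ∑ i ∈ Finset.range r, q ^ i := Nat.cast_injective h1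
    rwa [eps_eq_ncard hsimple subset_rfl] at h2
  -- number of lines through e
  have hmN' : 𝓁.ncard ≤ ∑ i ∈ Finset.range (r - 1), q ^ i := by
    have h2 := hcon e heE
    rw [eps_mcontract heE hnl, ← h𝓁, ← hcastr] at h2
    exact_mod_cast h2
  -- r is positive
  have hrpos : 1 ≤ r := by
    by_contra h
    have hr0 : r = 0 := by omega
    rw [hr0] at hEcard
    simp at hEcard
    have : 0 < M.E.ncard := (Set.ncard_pos M.ground_finite).mpr ⟨e, heE⟩
    omega
  have hNr' : ∑ i ∈ Finset.range r, q ^ i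
      = 1 + q * ∑ i ∈ Finset.range (r - 1), q ^ i := by
    obtain ⟨r', rfl⟩ : ∃ r', r = r' + 1 := ⟨r - 1, by omega⟩
    rw [geom_sum_succ]
    simp [Nat.add_comm]
  -- decomposition of the ground set
  set U := ⋃ L' ∈ 𝓁 \ {L}, (L' \ {e}) with hU
  have hUE : U ⊆ M.E := by
    refine iUnion₂_subset fun L' hL' => ?_
    exact diff_subset.trans hL'.1.1.subset_ground
  have hdecomp : M.E \ {e} ⊆ (L \ {e}) ∪ U := by
    intro f hf
    have hfE : f ∈ M.E := hf.1
    have hfe : f ≠ e := hf.2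
    have hp : M.Indep {e, f} := hsimple e heE f hfE
    obtain ⟨hflat, hrk, hecl, hfcl⟩ := closure_pair_line hsimple heE hfE (Ne.symm hfe)
    have hL0 : M.closure {e, f} ∈ 𝓁 := ⟨hflat, hrk, hecl⟩
    by_cases hL0L : M.closure {e, f} = L
    · exact Or.inl ⟨hL0L ▸ hfcl, hf.2⟩
    · exact Or.inr (mem_biUnion ⟨hL0, by simpa using hL0L⟩ ⟨hfcl, hf.2⟩)
  -- cardinality bounds
  have hlinecard : ∀ L' ∈ 𝓁, (L' \ {e}).ncard ≤ q := by
    intro L' hL'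
    have h1 : eps M L' = L'.ncard := eps_eq_ncard hsimple hL'.1.subset_ground
    have h2 : L'.ncard ≤ q + 1 := h1 ▸ hlines L' hL'.1 hL'.2.1
    have h3 : (L' \ {e}).ncard + 1 = L'.ncard :=
      Set.ncard_diff_singleton_add_one hL'.2.2 (M.set_finite L' hL'.1.subset_ground)
    omega
  obtain ⟨m', hm'⟩ : ∃ m', 𝓁.ncard = m' + 1 := ⟨𝓁.ncard - 1, by omega⟩
  have h𝓁diff : (𝓁 \ {L}).ncard = m' := by
    have := Set.ncard_diff_singleton_add_one hL𝓁 h𝓁fin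
    omega
  have hUle : U.ncard ≤ m' * q := by
    have h1 := ncard_biUnion_le_mul (s := 𝓁 \ {L}) (h𝓁fin.subset diff_subset) (fun L' => L' \ {e}) q
      (fun L' hL' => hlinecard L' hL'.1)
    rwa [h𝓁diff] at h1
  have hLe : (L \ {e}).ncard + 1 = L.ncard :=
    Set.ncard_diff_singleton_add_one heL (M.set_finite L hLE)
  have hEe : (M.E \ {e}).ncard + 1 = M.E.ncard :=
    Set.ncard_diff_singleton_add_one heE M.ground_finite
  have hEle : (M.E \ {e}).ncard ≤ (L \ {e}).ncard + U.ncard := by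
    calc (M.E \ {e}).ncard ≤ ((L \ {e}) ∪ U).ncard :=
          Set.ncard_le_ncard hdecomp
            (M.ground_finite.subset (union_subset (diff_subset.trans hLE) hUE))
    _ ≤ (L \ {e}).ncard + U.ncard := Set.ncard_union_le _ _
  -- final contradiction
  have hmul1 : q * (m' + 1) ≤ q * ∑ i ∈ Finset.range (r - 1), q ^ i :=
    Nat.mul_le_mul_left q (hm' ▸ hmN')
  have hmul2 : q * (m' + 1) = q * m' + q := by ring
  have hcomm : m' * q = q * m' := Nat.mul_comm _ _
  -- Nr ≤ q + q*m'  while  Nr ≥ 1 + q*m' + q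
  have hup : M.E.ncard ≤ (L \ {e}).ncard + U.ncard + 1 := by omega
  have hlow : 1 + (q * m' + q) ≤ ∑ i ∈ Finset.range r, q ^ i := by
    rw [hNr']
    omega
  rw [hEcard] at hup
  have hLq : (L \ {e}).ncard + 1 ≤ q := by omega
  have hUq : U.ncard ≤ q * m' := by omega
  omega
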